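/- If a profile P with an odd number of voters is single-peaked with respect to an axis ◁, then the majority relation of P is itself a linear order that is single-peaked on ◁. -/

import Mathlib

/-- A vote (linear order) over a finite set `A`, encoded as a ranking:
`v a < v b` means `a` is strictly preferred to `b`. -/
abbrev Vote (A : Type*) [Fintype A] := A ≃ Fin (Fintype.card A)

variable {A : Type*} [Fintype A] [DecidableEq A]

/-- `v` has no valley with respect to the axis `ax` (single-peakedness on `ax`). -/
def NoValley (ax v : Vote A) : Prop :=
  ∀ a b c : A, ax a < ax b → ax b < ax c → ¬(v a < v b ∧ v c < v b)

/-- The strict majority relation. -/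
def strictMaj {n : ℕ} (P : Fin n → Vote A) (a b : A) : Prop :=
  (Finset.univ.filter fun i => P i b < P i a).card <
  (Finset.univ.filter fun i => P i a < P i b).card

/-- Number of voters strictly preferring `x` to `y`. -/
private def Nc {n : ℕ} (P : Fin n → Vote A) (x y : A) : ℕ :=
  (Finset.univ.filter fun i => P i x < P i y).card

private lemma strictMaj_iff {n : ℕ} (P : Fin n → Vote A) (a b : A) :
    strictMaj P a b ↔ Nc P b a < Nc P a b := Iff.rfl

private lemma voter_total {n : ℕ} (P : Fin n → Vote A) (i : Fin n) {x y : A} (h : x ≠ y) :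
    P i x < P i y ∨ P i y < P i x :=
  lt_or_gt_of_ne (fun he => h ((P i).injective he))

private lemma Nc_le {n : ℕ} (P : Fin n → Vote A) {x y z w : A}
    (h : ∀ i, P i x < P i y → P i z < P i w) : Nc P x y ≤ Nc P z w := by
  refine Finset.card_le_card ?_
  intro i hi
  simp only [Finset.mem_filter, Finset.mem_univ, true_and] at hi ⊢
  exact h i hi

private lemma Nc_add {n : ℕ} (P : Fin n → Vote A) {x y : A} (h : x ≠ y) :
    Nc P x y + Nc P y x = n := by
  classical
  have h1 : (Finset.univ.filter fun i => P i x < P i y).card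
      + (Finset.univ.filter fun i => ¬ (P i x < P i y)).card = (Finset.univ : Finset (Fin n)).card :=
    Finset.card_filter_add_card_filter_not _
  have h2 : (Finset.univ.filter fun i => ¬ (P i x < P i y))
      = Finset.univ.filter fun i => P i y < P i x := by
    apply Finset.filter_congr
    intro i _
    constructor
    · intro hnot
      exact (voter_total P i h).resolve_left hnot
    · intro hlt
      exact lt_asymm hlt
  rw [h2] at h1
  simpa [Nc] using h1

private lemma maj_total {n : ℕ} (hodd : Odd n) (P : Fin n → Vote A) {x y : A} (h : x ≠ y) :
    strictMaj P x y ∨ strictMaj P y x := by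
  have hsum := Nc_add P h
  have hne : Nc P y x ≠ Nc P x y := by
    intro he
    obtain ⟨k, hk⟩ := hodd
    omega
  rcases lt_or_gt_of_ne hne with h' | h'
  · exact Or.inl h'
  · exact Or.inr h'

private lemma maj_ne {n : ℕ} {P : Fin n → Vote A} {x y : A} (h : strictMaj P x y) : x ≠ y := by
  rintro rfl
  exact lt_irrefl _ h

private lemma maj_asymm {n : ℕ} {P : Fin n → Vote A} {x y : A} (h : strictMaj P x y) :
    ¬ strictMaj P y x := by
  intro h'
  exact lt_asymm h h'

/-- Core counting lemma: if `b` is never worst among `{a,b,c}` for any voter,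
then `a` majority-beats `b` and `c` majority-beats `a` cannot both hold. -/
private lemma noPair {n : ℕ} {P : Fin n → Vote A} {a b c : A} (hbc : b ≠ c)
    (hmid : ∀ i, ¬(P i a < P i b ∧ P i c < P i b))
    (h1 : strictMaj P a b) (h3 : strictMaj P c a) : False := by
  have hab : a ≠ b := maj_ne h1
  have s1 : ∀ i, P i a < P i b → P i a < P i c := by
    intro i hi
    have hcb : ¬ (P i c < P i b) := fun hc => hmid i ⟨hi, hc⟩
    have : P i b < P i c := (voter_total P i hbc).resolve_right hcb
    exact lt_trans hi this
  have s4 : ∀ i, P i c < P i a → P i b < P i a := by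
    intro i hi
    by_contra hba
    have hab' : P i a < P i b := (voter_total P i hab).resolve_right hba
    exact hmid i ⟨hab', lt_trans hi hab'⟩
  have c1 : Nc P b a < Nc P a b := h1
  have c2 : Nc P a b ≤ Nc P a c := Nc_le P s1
  have c3 : Nc P a c < Nc P c a := h3
  have c4 : Nc P c a ≤ Nc P b a := Nc_le P s4
  omega

/-- No majority cycles for single-peaked profiles. -/
private lemma no_cycle {n : ℕ} {P : Fin n → Vote A} {ax : Vote A}
    (hsp : ∀ i, NoValley ax (P i)) {a b c : A}
    (m1 : strictMaj P a b) (m2 : strictMaj P b c) (m3 : strictMaj P c a) : False := by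
  have hab : a ≠ b := maj_ne m1
  have hbc : b ≠ c := maj_ne m2
  have hca : c ≠ a := maj_ne m3
  have hax_ab : ax a ≠ ax b := fun h => hab (ax.injective h)
  have hax_bc : ax b ≠ ax c := fun h => hbc (ax.injective h)
  have hax_ca : ax c ≠ ax a := fun h => hca (ax.injective h)
  -- case on which of a, b, c is in the middle of the axis
  rcases lt_or_gt_of_ne hax_ab with h1 | h1 <;> rcases lt_or_gt_of_ne hax_bc with h2 | h2 <;>
    rcases lt_or_gt_of_ne hax_ca with h3 | h3
  · -- a < b, b < c : middle b
    exact noPair hbc (fun i => hsp i a b c h1 h2) m1 m3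
  · exact noPair hbc (fun i => hsp i a b c h1 h2) m1 m3
  · -- a < b, c < b, c < a : order c < a < b, middle a; triple (c, a, b)
    exact noPair hab (fun i hx => hsp i c a b h3 h1 ⟨hx.1, hx.2⟩) m3 m2
  · -- a < b, c < b, a < c : order a < c < b, middle c; triple (b, c, a)
    exact noPair hca (fun i hx => hsp i a c b h3 h2 ⟨hx.2, hx.1⟩) m2 m1
  · -- b < a, b < c, c < a : order b < c < a, middle c; triple (b, c, a)
    exact noPair hca (fun i => hsp i b c a h2 h3) m2 m1
  · -- b < a, b < c, a < c : order b < a < c, middle a; triple (c, a, b)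
    exact noPair hab (fun i hx => hsp i b a c h1 h3 ⟨hx.2, hx.1⟩) m3 m2
  · -- b < a, c < b : middle b, orientation c < b < a
    exact noPair hbc (fun i hx => hsp i c b a h2 h1 ⟨hx.2, hx.1⟩) m1 m3
  · exact noPair hbc (fun i hx => hsp i c b a h2 h1 ⟨hx.2, hx.1⟩) m1 m3

private lemma maj_trans {n : ℕ} (hodd : Odd n) {P : Fin n → Vote A} {ax : Vote A}
    (hsp : ∀ i, NoValley ax (P i)) {a b c : A}
    (h1 : strictMaj P a b) (h2 : strictMaj P b c) : strictMaj P a c := by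
  have hac : a ≠ c := by
    rintro rfl
    exact maj_asymm h1 h2
  by_contra h
  have hca : strictMaj P c a := (maj_total hodd P hac).resolve_left h
  exact no_cycle hsp h1 h2 hca

theorem majority_singlePeaked_of_singlePeaked_odd {n : ℕ} (hodd : Odd n)
    (P : Fin n → Vote A) (ax : Vote A) (hsp : ∀ i, NoValley ax (P i)) :
    ∃ w : Vote A, (∀ a b : A, strictMaj P a b ↔ w a < w b) ∧ NoValley ax w := by
  classical
  letI lin : LinearOrder A :=
    { le := fun a b => a = b ∨ strictMaj P a b
      lt := strictMaj P
      le_refl := fun a => Or.inl rfl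
      le_trans := by
        rintro a b c (rfl | h1) h2
        · exact h2
        · rcases h2 with rfl | h2
          · exact Or.inr h1
          · exact Or.inr (maj_trans hodd hsp h1 h2)
      lt_iff_le_not_ge := by
        intro a b
        constructor
        · intro h
          refine ⟨Or.inr h, ?_⟩
          rintro (rfl | h')
          · exact maj_asymm h h
          · exact maj_asymm h h'
        · rintro ⟨(rfl | h), hnot⟩
          · exact absurd (Or.inl rfl) hnot
          · exact h
      le_antisymm := by
        rintro a b (rfl | h1) h2
        · rfl
        · rcases h2 with rfl | h2
          · rfl
          · exact absurd h2 (maj_asymm h1)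
      le_total := by
        intro a b
        by_cases hab : a = b
        · exact Or.inl (Or.inl hab)
        · rcases maj_total hodd P hab with h | h
          · exact Or.inl (Or.inr h)
          · exact Or.inr (Or.inr h)
      toDecidableLE := fun _ _ => Classical.propDecidable _ }
  let e : A ≃o Fin (Fintype.card A) := (monoEquivOfFin A rfl).symm
  refine ⟨e.toEquiv, fun a b => ?_, ?_⟩
  · exact (e.lt_iff_lt).symm
  · intro a b c h1 h2 hx
    obtain ⟨hwab, hwcb⟩ := hx
    have hab : a ≠ b := fun h => (lt_irrefl _ (h ▸ h1 : ax a < ax a))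
    have hbc : b ≠ c := fun h => (lt_irrefl _ (h ▸ h2 : ax b < ax b))
    have mab : strictMaj P a b := e.lt_iff_lt.mp hwab
    have mcb : strictMaj P c b := e.lt_iff_lt.mp hwcb
    have hmid : ∀ i, ¬(P i a < P i b ∧ P i c < P i b) := fun i => hsp i a b c h1 h2
    have s1 : ∀ i, P i a < P i b → P i b < P i c := by
      intro i hi
      exact (voter_total P i hbc).resolve_right (fun hc => hmid i ⟨hi, hc⟩)
    have s2 : ∀ i, P i c < P i b → P i b < P i a := by
      intro i hi
      exact (voter_total P i (Ne.symm hab)).resolve_right (fun ha => hmid i ⟨ha, hi⟩)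
    have c1 : Nc P b a < Nc P a b := mab
    have c2 : Nc P a b ≤ Nc P b c := Nc_le P s1
    have c3 : Nc P b c < Nc P c b := mcb
    have c4 : Nc P c b ≤ Nc P b a := Nc_le P s2
    omega
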